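/- Suppose the step sizes are constant, η_t ≡ η for some η > 0. Then, almost surely, liminf_{t→∞} Coverage_t = 0 and limsup_{t→∞} Coverage_t = 1. -/

import Mathlib

open MeasureTheory Filter


/-- Recursive block event: either `bad` fires at the current time, or the step
event `X` occurs and we continue. -/
def blockEvt {Ω : Type*} (bad X : ℕ → Set Ω) : ℕ → ℕ → Set Ω
  | _, 0 => Set.univ
  | a, (k+1) => bad a ∪ (X a ∩ blockEvt bad X (a+1) k)

lemma blockEvt_meas {Ω : Type*} {mΩ : MeasurableSpace Ω} (ℱ : Filtration ℕ mΩ)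
    (bad X : ℕ → Set Ω)
    (hbad : ∀ a, MeasurableSet[ℱ a] (bad (a+1)))
    (hX : ∀ a, MeasurableSet[ℱ (a+1)] (X (a+1))) :
    ∀ k a, MeasurableSet[ℱ (a+k)] (blockEvt bad X (a+1) k) := by
  intro k
  induction k with
  | zero => intro a; exact MeasurableSet.univ
  | succ k ih =>
      intro a
      have h1 : MeasurableSet[ℱ (a+(k+1))] (bad (a+1)) :=
        ℱ.mono (by omega) _ (hbad a)
      have h2 : MeasurableSet[ℱ (a+(k+1))] (X (a+1)) :=
        ℱ.mono (by omega) _ (hX a)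
      have h3 : MeasurableSet[ℱ (a+(k+1))] (blockEvt bad X (a+2) k) := by
        have := ih (a+1)
        have e : a + 1 + k = a + (k+1) := by omega
        rw [e] at this
        exact this
      exact h1.union (h2.inter h3)

lemma blockEvt_subset {Ω : Type*} (bad X : ℕ → Set Ω) :
    ∀ k a (ω : Ω), ω ∈ blockEvt bad X a k →
      (∃ s, a ≤ s ∧ s < a + k ∧ ω ∈ bad s) ∨ (∀ i < k, ω ∈ X (a + i)) := by
  intro k
  induction k with
  | zero => intro a ω _; exact Or.inr (fun i hi => absurd hi (Nat.not_lt_zero i))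
  | succ k ih =>
      intro a ω hω
      rcases hω with hb | ⟨hXa, hG⟩
      · exact Or.inl ⟨a, le_rfl, by omega, hb⟩
      · rcases ih (a+1) ω hG with ⟨s, hs1, hs2, hs3⟩ | hall
        · exact Or.inl ⟨s, by omega, by omega, hs3⟩
        · refine Or.inr fun i hi => ?_
          match i with
          | 0 => simpa using hXa
          | (j+1) =>
              have := hall j (by omega)
              have e : a + 1 + j = a + (j+1) := by omega
              rwa [e] at this

lemma blockEvt_prob {Ω : Type*} {mΩ : MeasurableSpace Ω} (μ : Measure Ω)
    [IsProbabilityMeasure μ] (ℱ : Filtration ℕ mΩ) (bad X : ℕ → Set Ω) (ε : ℝ)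
    (hε0 : 0 ≤ ε) (hε1 : ε ≤ 1)
    (hbad : ∀ a, MeasurableSet[ℱ a] (bad (a+1)))
    (hX : ∀ a, MeasurableSet[ℱ (a+1)] (X (a+1)))
    (hprob : ∀ (a : ℕ) (A : Set Ω), MeasurableSet[ℱ a] A → A ⊆ (bad (a+1))ᶜ →
      ε * (μ A).toReal ≤ (μ (X (a+1) ∩ A)).toReal) :
    ∀ k a (A : Set Ω), MeasurableSet[ℱ a] A →
      ε ^ k * (μ A).toReal ≤ (μ (blockEvt bad X (a+1) k ∩ A)).toReal := by
  intro k
  induction k with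
  | zero =>
      intro a A hA
      simp [blockEvt]
  | succ k ih =>
      intro a A hA
      -- ambient measurability
      have hbad' : MeasurableSet (bad (a+1)) := ℱ.le a _ (hbad a)
      have hX' : MeasurableSet (X (a+1)) := ℱ.le (a+1) _ (hX a)
      have hA' : MeasurableSet A := ℱ.le a _ hA
      set A₁ : Set Ω := A ∩ bad (a+1) with hA₁def
      set A₂ : Set Ω := A ∩ (bad (a+1))ᶜ with hA₂def
      have hA₂m : MeasurableSet[ℱ a] A₂ := hA.inter (hbad a).compl
      have hA₂m' : MeasurableSet A₂ := ℱ.le a _ hA₂m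
      have hXA₂ : MeasurableSet[ℱ (a+1)] (X (a+1) ∩ A₂) :=
        (hX a).inter (ℱ.mono (by omega) _ hA₂m)
      have hG : MeasurableSet (blockEvt bad X (a+2) k) := by
        have := blockEvt_meas ℱ bad X hbad hX k (a+1)
        exact ℱ.le _ _ this
      have hIH := ih (a+1) (X (a+1) ∩ A₂) hXA₂
      have hstep := hprob a A₂ hA₂m (Set.inter_subset_right)
      -- chain
      have hD : ε ^ (k+1) * (μ A₂).toReal ≤
          (μ (blockEvt bad X (a+2) k ∩ (X (a+1) ∩ A₂))).toReal := by
        calc ε ^ (k+1) * (μ A₂).toReal = ε ^ k * (ε * (μ A₂).toReal) := by ring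
        _ ≤ ε ^ k * (μ (X (a+1) ∩ A₂)).toReal := by
              exact mul_le_mul_of_nonneg_left hstep (pow_nonneg hε0 k)
        _ ≤ _ := hIH
      -- split μ A
      have hsplit : μ A₁ + μ A₂ = μ A := by
        have := measure_inter_add_diff (μ := μ) A hbad'
        rwa [Set.diff_eq] at this
      have hfin1 : μ A₁ ≠ ⊤ := measure_ne_top μ _
      have hfin2 : μ A₂ ≠ ⊤ := measure_ne_top μ _
      have htA : (μ A).toReal = (μ A₁).toReal + (μ A₂).toReal := by
        rw [← hsplit, ENNReal.toReal_add hfin1 hfin2]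
      -- union bound
      set D : Set Ω := blockEvt bad X (a+2) k ∩ (X (a+1) ∩ A₂) with hDdef
      have hDm : MeasurableSet D := hG.inter (hX'.inter hA₂m')
      have hdisj : Disjoint A₁ D := by
        refine Set.disjoint_left.mpr fun ω hω1 hωD => ?_
        exact hωD.2.2.2 hω1.2
      have hsub : A₁ ∪ D ⊆ blockEvt bad X (a+1) (k+1) ∩ A := by
        intro ω hω
        rcases hω with hω | hω
        · exact ⟨Or.inl hω.2, hω.1⟩
        · exact ⟨Or.inr ⟨hω.2.1, hω.1⟩, hω.2.2.1⟩
      have hμu : μ (A₁ ∪ D) = μ A₁ + μ D := measure_union hdisj hDm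
      have hmono : (μ (A₁ ∪ D)).toReal ≤ (μ (blockEvt bad X (a+1) (k+1) ∩ A)).toReal :=
        ENNReal.toReal_mono (measure_ne_top μ _) (measure_mono hsub)
      have hεk1 : ε ^ (k+1) ≤ 1 := pow_le_one₀ hε0 hε1
      calc ε ^ (k+1) * (μ A).toReal
          = ε ^ (k+1) * (μ A₁).toReal + ε ^ (k+1) * (μ A₂).toReal := by rw [htA]; ring
        _ ≤ (μ A₁).toReal + (μ D).toReal := by
            have h1 : ε ^ (k+1) * (μ A₁).toReal ≤ (μ A₁).toReal := by
              nlinarith [ENNReal.toReal_nonneg (a := μ A₁)]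
            exact add_le_add h1 hD
        _ = (μ (A₁ ∪ D)).toReal := by
            rw [hμu, ENNReal.toReal_add hfin1 (measure_ne_top μ _)]
        _ ≤ _ := hmono

lemma freq_bad {Ω : Type*} {mΩ : MeasurableSpace Ω} (μ : Measure Ω)
    [IsProbabilityMeasure μ] (ℱ : Filtration ℕ mΩ) (bad X : ℕ → Set Ω) (ε : ℝ)
    (hε0 : 0 < ε) (hε1 : ε ≤ 1) (K : ℕ)
    (hbad : ∀ a, MeasurableSet[ℱ a] (bad (a+1)))
    (hX : ∀ a, MeasurableSet[ℱ (a+1)] (X (a+1)))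
    (hprob : ∀ (a : ℕ) (A : Set Ω), MeasurableSet[ℱ a] A → A ⊆ (bad (a+1))ᶜ →
      ε * (μ A).toReal ≤ (μ (X (a+1) ∩ A)).toReal)
    (himp : ∀ (a : ℕ) (ω : Ω), ¬ (∀ i < K, ω ∈ X (a + 1 + i))) :
    ∀ᵐ ω ∂μ, ∀ T : ℕ, ∃ s, T ≤ s ∧ 1 ≤ s ∧ ω ∈ bad s := by
  rw [ae_all_iff]
  intro T
  set G : ℕ → Set Ω := fun j => blockEvt bad X (T + j*K + 1) K with hGdef
  have hGmeas : ∀ j, MeasurableSet (G j) := fun j =>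
    ℱ.le _ _ (blockEvt_meas ℱ bad X hbad hX K (T + j*K))
  have hGmeasF : ∀ j, MeasurableSet[ℱ (T + (j+1)*K)] (G j) := by
    intro j
    have := blockEvt_meas ℱ bad X hbad hX K (T + j*K)
    have e : T + j*K + K = T + (j+1)*K := by ring
    rwa [e] at this
  set H : ℕ → Set Ω := fun n => ⋂ j ∈ Finset.range n, (G j)ᶜ with hHdef
  have hHmeasF : ∀ n, MeasurableSet[ℱ (T + n*K)] (H n) := by
    intro n
    refine Finset.measurableSet_biInter _ fun j hj => ?_
    have hj' : j < n := Finset.mem_range.mp hj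
    exact (ℱ.mono (by nlinarith) _ (hGmeasF j)).compl
  have hHmeas : ∀ n, MeasurableSet (H n) := fun n => ℱ.le _ _ (hHmeasF n)
  have hHsucc : ∀ n, H (n+1) = H n ∩ (G n)ᶜ := by
    intro n
    simp only [hHdef, Finset.range_add_one, Finset.set_biInter_insert]
    exact Set.inter_comm _ _
  have hHbound : ∀ n, (μ (H n)).toReal ≤ (1 - ε^K)^n := by
    intro n
    induction n with
    | zero =>
        simp [hHdef, measure_univ]
    | succ n ih =>
        have hkey := blockEvt_prob μ ℱ bad X ε hε0.le hε1 hbad hX hprob K (T + n*K)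
          (H n) (hHmeasF n)
        have hsplit : μ (H n ∩ G n) + μ (H n \ G n) = μ (H n) :=
          measure_inter_add_diff (H n) (hGmeas n)
        have hdiff : H n \ G n = H (n+1) := by
          rw [hHsucc n, Set.diff_eq]
        have htadd : (μ (H n ∩ G n)).toReal + (μ (H (n+1))).toReal = (μ (H n)).toReal := by
          rw [← hdiff, ← ENNReal.toReal_add (measure_ne_top μ _) (measure_ne_top μ _), hsplit]
        have hcomm : (μ (blockEvt bad X (T + n*K + 1) K ∩ H n)).toReal
            = (μ (H n ∩ G n)).toReal := by rw [Set.inter_comm]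
        rw [hcomm] at hkey
        have hεK1 : ε ^ K ≤ 1 := pow_le_one₀ hε0.le hε1
        calc (μ (H (n+1))).toReal = (μ (H n)).toReal - (μ (H n ∩ G n)).toReal := by
              linarith
          _ ≤ (1 - ε^K) * (μ (H n)).toReal := by nlinarith
          _ ≤ (1 - ε^K)^(n+1) := by
              have h0 : (0:ℝ) ≤ 1 - ε^K := by linarith
              calc (1 - ε^K) * (μ (H n)).toReal ≤ (1 - ε^K) * (1 - ε^K)^n :=
                    mul_le_mul_of_nonneg_left ih h0
                _ = (1 - ε^K)^(n+1) := by ring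
  have hnull : μ (⋂ j, (G j)ᶜ) = 0 := by
    have hle : ∀ n, (μ (⋂ j, (G j)ᶜ)).toReal ≤ (1 - ε^K)^n := by
      intro n
      refine le_trans (ENNReal.toReal_mono (measure_ne_top μ _) (measure_mono ?_)) (hHbound n)
      exact fun ω hω => Set.mem_biInter fun j _ => Set.mem_iInter.mp hω j
    have htend : Tendsto (fun n => (1 - ε^K : ℝ)^n) atTop (nhds 0) := by
      apply tendsto_pow_atTop_nhds_zero_of_lt_one
      · have : 0 < ε ^ K := pow_pos hε0 K
        linarith [pow_le_one₀ hε0.le hε1 (n := K)]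
      · have : 0 < ε ^ K := pow_pos hε0 K
        linarith
    have h0 : (μ (⋂ j, (G j)ᶜ)).toReal ≤ 0 := ge_of_tendsto' htend hle
    have h1 : (μ (⋂ j, (G j)ᶜ)).toReal = 0 := le_antisymm h0 ENNReal.toReal_nonneg
    exact (ENNReal.toReal_eq_zero_iff _).mp h1 |>.resolve_right (measure_ne_top μ _)
  have hae : ∀ᵐ ω ∂μ, ω ∉ ⋂ j, (G j)ᶜ := by
    rw [ae_iff]
    convert hnull using 2
    ext ω
    simp [Set.mem_iInter]
  filter_upwards [hae] with ω hω
  have hj : ∃ j, ω ∈ G j := by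
    by_contra hcon
    push_neg at hcon
    exact hω (Set.mem_iInter.mpr fun j => hcon j)
  obtain ⟨j, hjG⟩ := hj
  rcases blockEvt_subset bad X K (T + j*K + 1) ω hjG with ⟨s, hs1, _, hs3⟩ | hall
  · exact ⟨s, by omega, by omega, hs3⟩
  · exact absurd (fun i hi => by simpa using hall i hi) (himp (T + j*K) ω)

lemma integrable_of_mem_Icc01 {Ω : Type*} {mΩ : MeasurableSpace Ω} (μ : Measure Ω)
    [IsProbabilityMeasure μ] {f : Ω → ℝ} (hf : Measurable f)
    (h : ∀ ω, f ω ∈ Set.Icc (0:ℝ) 1) : Integrable f μ :=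
  (integrable_const (1:ℝ)).mono' hf.aestronglyMeasurable (ae_of_all _ fun ω => by
    rw [Real.norm_eq_abs, abs_le]; constructor <;> linarith [(h ω).1, (h ω).2])

/-- **Constant step size: instantaneous coverage oscillates (online-trained scores).**
Fix `α ∈ (0,1)` and `B > 0`. Let `(ℱ t)` be a filtration, `(S t)_{t ≥ 1}` scores in `[0,B]`
with `S t` being `ℱ t`-measurable, and `Fc t ω` a regular conditional CDF of `S t` given
`ℱ (t-1)`. With constant step size `η > 0`, deterministic `q 1 = q1 ∈ [0,B]`, and update
`q (t+1) = q t + η * (1{S t > q t} - α)`, almost surely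
`liminf_t Coverage_t = 0` and `limsup_t Coverage_t = 1`, where
`Coverage_t ω = Fc t ω (q t ω)`. -/
theorem coverage_liminf_zero_limsup_one
    {Ω : Type*} {mΩ : MeasurableSpace Ω} (μ : Measure Ω) [IsProbabilityMeasure μ]
    (ℱ : Filtration ℕ mΩ)
    (α B : ℝ) (hα : α ∈ Set.Ioo (0 : ℝ) 1) (hB : 0 < B)
    (S : ℕ → Ω → ℝ)
    (hSrange : ∀ t, 1 ≤ t → ∀ ω, S t ω ∈ Set.Icc 0 B)
    (hSmeas : ∀ t, 1 ≤ t → Measurable[ℱ t] (S t))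
    (Fc : ℕ → Ω → ℝ → ℝ)
    (hFc01 : ∀ t, 1 ≤ t → ∀ ω r, Fc t ω r ∈ Set.Icc (0 : ℝ) 1)
    (hFc_meas : ∀ t, 1 ≤ t → ∀ r, Measurable[ℱ (t - 1)] (fun ω => Fc t ω r))
    (hFc_cond : ∀ t, 1 ≤ t → ∀ r : ℝ,
      (fun ω => Fc t ω r) =ᵐ[μ] μ[fun ω => if S t ω ≤ r then (1 : ℝ) else 0|ℱ (t - 1)])
    (hFc_cdf : ∀ t, 1 ≤ t → ∀ᵐ ω ∂μ,
      Monotone (Fc t ω) ∧ (∀ r, ContinuousWithinAt (Fc t ω) (Set.Ici r) r) ∧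
      (∀ r, r < 0 → Fc t ω r = 0) ∧ (∀ r, B ≤ r → Fc t ω r = 1))
    (η : ℝ) (hη : 0 < η)
    (q1 : ℝ) (hq1 : q1 ∈ Set.Icc 0 B)
    (q : ℕ → Ω → ℝ) (hq_init : ∀ ω, q 1 ω = q1)
    (hrec : ∀ t, 1 ≤ t → ∀ ω,
      q (t + 1) ω = q t ω + η * ((if q t ω < S t ω then (1 : ℝ) else 0) - α)) :
    ∀ᵐ ω ∂μ, liminf (fun t => Fc t ω (q t ω)) atTop = 0 ∧
      limsup (fun t => Fc t ω (q t ω)) atTop = 1 := by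
  obtain ⟨hα0, hα1⟩ := hα
  -- measurability of q
  have hqmeas : ∀ a : ℕ, Measurable[ℱ a] (q (a+1)) := by
    intro a
    induction a with
    | zero =>
        have : q 1 = fun _ => q1 := funext hq_init
        rw [this]; exact measurable_const
    | succ a ih =>
        have hq' : Measurable[ℱ (a+1)] (q (a+1)) := ih.mono (ℱ.mono (by omega)) le_rfl
        have hS' : Measurable[ℱ (a+1)] (S (a+1)) := hSmeas (a+1) (by omega)
        have hset : MeasurableSet[ℱ (a+1)] {ω | q (a+1) ω < S (a+1) ω} :=
          measurableSet_lt hq' hS'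
        have : q (a+2) = fun ω =>
            q (a+1) ω + η * ((if q (a+1) ω < S (a+1) ω then (1:ℝ) else 0) - α) :=
          funext (hrec (a+1) (by omega))
        rw [this]
        exact hq'.add (((Measurable.ite hset measurable_const measurable_const).sub
          measurable_const).const_mul η)
  have hqmeas' : ∀ a : ℕ, Measurable (q (a+1)) := fun a => (hqmeas a).mono (ℱ.le a) le_rfl
  have hSmeas' : ∀ a : ℕ, Measurable (S (a+1)) :=
    fun a => (hSmeas (a+1) (by omega)).mono (ℱ.le (a+1)) le_rfl
  -- bounds on q
  have hqbdd : ∀ a : ℕ, ∀ ω, -(η*α) ≤ q (a+1) ω ∧ q (a+1) ω ≤ B + η*(1-α) := by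
    intro a
    induction a with
    | zero =>
        intro ω; rw [hq_init ω]
        constructor
        · nlinarith [hq1.1]
        · nlinarith [hq1.2]
    | succ a ih =>
        intro ω
        have h := hrec (a+1) (by omega) ω
        obtain ⟨ih1, ih2⟩ := ih ω
        by_cases hc : q (a+1) ω < S (a+1) ω
        · rw [if_pos hc] at h
          have hSB := (hSrange (a+1) (by omega) ω).2
          constructor <;> nlinarith
        · rw [if_neg hc] at h
          have hS0 := (hSrange (a+1) (by omega) ω).1
          push_neg at hc
          constructor <;> nlinarith
  -- finite range of q
  have hqfin : ∀ a : ℕ, ∃ V : Finset ℝ, ∀ ω, q (a+1) ω ∈ V := by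
    intro a
    induction a with
    | zero => exact ⟨{q1}, fun ω => by simp [hq_init ω]⟩
    | succ a ih =>
        obtain ⟨V, hV⟩ := ih
        refine ⟨V.image (fun x => x + η*(1-α)) ∪ V.image (fun x => x - η*α), fun ω => ?_⟩
        have h := hrec (a+1) (by omega) ω
        by_cases hc : q (a+1) ω < S (a+1) ω
        · rw [if_pos hc] at h
          refine Finset.mem_union_left _ (Finset.mem_image.mpr ⟨q (a+1) ω, hV ω, ?_⟩)
          linarith [h]
        · rw [if_neg hc] at h
          refine Finset.mem_union_right _ (Finset.mem_image.mpr ⟨q (a+1) ω, hV ω, ?_⟩)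
          linarith [h]
  -- measurability of coverage
  have hcovmeas : ∀ a : ℕ, Measurable[ℱ a] (fun ω => Fc (a+1) ω (q (a+1) ω)) := by
    intro a
    obtain ⟨V, hV⟩ := hqfin a
    have hFcm : ∀ r : ℝ, Measurable[ℱ a] (fun ω => Fc (a+1) ω r) := by
      intro r
      have := hFc_meas (a+1) (by omega) r
      simpa using this
    have heq : (fun ω => Fc (a+1) ω (q (a+1) ω)) =
        fun ω => ∑ v ∈ V, if q (a+1) ω = v then Fc (a+1) ω v else 0 := by
      funext ω
      rw [Finset.sum_ite_eq V (q (a+1) ω) (fun v => Fc (a+1) ω v), if_pos (hV ω)]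
    rw [heq]
    refine Finset.measurable_sum _ fun v _ => Measurable.ite ?_ (hFcm v) measurable_const
    exact hqmeas a (measurableSet_singleton v)
  have hcovmeas' : ∀ a : ℕ, Measurable (fun ω => Fc (a+1) ω (q (a+1) ω)) :=
    fun a => (hcovmeas a).mono (ℱ.le a) le_rfl
  have hcov01 : ∀ (a : ℕ) ω, Fc (a+1) ω (q (a+1) ω) ∈ Set.Icc (0:ℝ) 1 :=
    fun a ω => hFc01 (a+1) (by omega) ω _
  have hcovint : ∀ a : ℕ, Integrable (fun ω => Fc (a+1) ω (q (a+1) ω)) μ :=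
    fun a => integrable_of_mem_Icc01 μ (hcovmeas' a) (hcov01 a)
  have hgmeas : ∀ (a : ℕ) (v : ℝ), Measurable (fun ω => if S (a+1) ω ≤ v then (1:ℝ) else 0) :=
    fun a v => Measurable.ite (measurableSet_le (hSmeas' a) measurable_const)
      measurable_const measurable_const
  have hgint : ∀ (a : ℕ) (v : ℝ), Integrable (fun ω => if S (a+1) ω ≤ v then (1:ℝ) else 0) μ :=
    fun a v => integrable_of_mem_Icc01 μ (hgmeas a v)
      (fun ω => by by_cases h : S (a+1) ω ≤ v <;> simp [h])
  -- the substitution identity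
  have hsub : ∀ (a : ℕ) (A : Set Ω), MeasurableSet[ℱ a] A →
      (μ ({ω | S (a+1) ω ≤ q (a+1) ω} ∩ A)).toReal
        = ∫ ω in A, Fc (a+1) ω (q (a+1) ω) ∂μ := by
    intro a A hA
    obtain ⟨V, hV⟩ := hqfin a
    set C : ℝ → Set Ω := fun v => A ∩ {ω | q (a+1) ω = v} with hC
    have hCmF : ∀ v, MeasurableSet[ℱ a] (C v) :=
      fun v => hA.inter (hqmeas a (measurableSet_singleton v))
    have hCm : ∀ v, MeasurableSet (C v) := fun v => ℱ.le a _ (hCmF v)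
    have hCdisj : (↑V : Set ℝ).PairwiseDisjoint C := by
      intro u _ v _ huv
      refine Set.disjoint_left.mpr fun ω h1 h2 => huv ?_
      rw [← h1.2, ← h2.2]
    have hCun : ⋃ v ∈ V, C v = A := by
      apply Set.Subset.antisymm
      · exact Set.iUnion₂_subset fun v _ => Set.inter_subset_left
      · intro ω hω
        exact Set.mem_biUnion (hV ω) ⟨hω, rfl⟩
    have hLHS : {ω | S (a+1) ω ≤ q (a+1) ω} ∩ A
        = ⋃ v ∈ V, ({ω | S (a+1) ω ≤ v} ∩ C v) := by
      ext ω
      constructor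
      · intro hω
        refine Set.mem_biUnion (hV ω) ⟨?_, hω.2, rfl⟩
        exact hω.1
      · intro hω
        obtain ⟨v, _, h1, h2, h3⟩ := Set.mem_iUnion₂.mp hω
        have h3' : q (a+1) ω = v := h3
        exact ⟨by simp only [Set.mem_setOf_eq, h3']; exact h1, h2⟩
    have hterm : ∀ v ∈ V, (μ ({ω | S (a+1) ω ≤ v} ∩ C v)).toReal
        = ∫ ω in C v, Fc (a+1) ω (q (a+1) ω) ∂μ := by
      intro v _
      have hSv : MeasurableSet {ω | S (a+1) ω ≤ v} :=
        measurableSet_le (hSmeas' a) measurable_const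
      have e1 : ∫ ω in C v, (if S (a+1) ω ≤ v then (1:ℝ) else 0) ∂μ
          = (μ ({ω | S (a+1) ω ≤ v} ∩ C v)).toReal := by
        have : (fun ω => if S (a+1) ω ≤ v then (1:ℝ) else 0)
            = Set.indicator {ω | S (a+1) ω ≤ v} (fun _ => (1:ℝ)) := by
          funext ω; simp [Set.indicator_apply]
        rw [this, setIntegral_indicator hSv, setIntegral_const]
        rw [Set.inter_comm]
        simp
        rfl
      have e2 : ∫ ω in C v, (if S (a+1) ω ≤ v then (1:ℝ) else 0) ∂μ
          = ∫ ω in C v, Fc (a+1) ω v ∂μ := by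
        rw [← setIntegral_condExp (ℱ.le a) (hgint a v) (hCmF v)]
        refine setIntegral_congr_ae (hCm v) ?_
        have hc := hFc_cond (a+1) (by omega) v
        rw [Nat.add_sub_cancel] at hc
        filter_upwards [hc] with ω hω _
        exact hω.symm
      have e3 : ∫ ω in C v, Fc (a+1) ω v ∂μ
          = ∫ ω in C v, Fc (a+1) ω (q (a+1) ω) ∂μ := by
        refine setIntegral_congr_fun (hCm v) fun ω hω => ?_
        rw [hω.2]
      rw [← e3, ← e2, e1]
    calc (μ ({ω | S (a+1) ω ≤ q (a+1) ω} ∩ A)).toReal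
        = (∑ v ∈ V, μ ({ω | S (a+1) ω ≤ v} ∩ C v)).toReal := by
          rw [hLHS, measure_biUnion_finset
            (hCdisj.mono_on fun v _ => Set.inter_subset_right)
            (fun v _ => (measurableSet_le (hSmeas' a) measurable_const).inter (hCm v))]
      _ = ∑ v ∈ V, (μ ({ω | S (a+1) ω ≤ v} ∩ C v)).toReal :=
          ENNReal.toReal_sum (fun v _ => measure_ne_top μ _)
      _ = ∑ v ∈ V, ∫ ω in C v, Fc (a+1) ω (q (a+1) ω) ∂μ :=
          Finset.sum_congr rfl hterm
      _ = ∫ ω in A, Fc (a+1) ω (q (a+1) ω) ∂μ := by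
          rw [← hCun, integral_biUnion_finset V (fun v _ => hCm v) hCdisj
            (fun v _ => (hcovint a).integrableOn)]
  -- conditional probability bounds
  have hprob1 : ∀ (n a : ℕ) (A : Set Ω), MeasurableSet[ℱ a] A →
      A ⊆ ({ω | Fc (a+1) ω (q (a+1) ω) < 1/((n:ℝ)+1)})ᶜ →
      (1/((n:ℝ)+1)) * (μ A).toReal ≤ (μ ({ω | S (a+1) ω ≤ q (a+1) ω} ∩ A)).toReal := by
    intro n a A hA hsubA
    rw [hsub a A hA]
    refine setIntegral_ge_of_const_le_real (ℱ.le a _ hA) (measure_ne_top μ _) ?_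
      ((hcovint a).integrableOn)
    intro ω hω
    have := hsubA hω
    simp only [Set.mem_compl_iff, Set.mem_setOf_eq, not_lt] at this
    exact this
  have hprob2 : ∀ (n a : ℕ) (A : Set Ω), MeasurableSet[ℱ a] A →
      A ⊆ ({ω | 1 - 1/((n:ℝ)+1) < Fc (a+1) ω (q (a+1) ω)})ᶜ →
      (1/((n:ℝ)+1)) * (μ A).toReal ≤ (μ ({ω | q (a+1) ω < S (a+1) ω} ∩ A)).toReal := by
    intro n a A hA hsubA
    have hA' : MeasurableSet A := ℱ.le a _ hA
    have hsplit : μ (A ∩ {ω | S (a+1) ω ≤ q (a+1) ω})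
        + μ (A \ {ω | S (a+1) ω ≤ q (a+1) ω}) = μ A :=
      measure_inter_add_diff A (measurableSet_le (hSmeas' a) (hqmeas' a))
    have hdiff : A \ {ω | S (a+1) ω ≤ q (a+1) ω} = {ω | q (a+1) ω < S (a+1) ω} ∩ A := by
      ext ω
      simp only [Set.mem_diff, Set.mem_setOf_eq, not_le, Set.mem_inter_iff]
      tauto
    have e2 : (μ (A ∩ {ω | S (a+1) ω ≤ q (a+1) ω})).toReal
        + (μ ({ω | q (a+1) ω < S (a+1) ω} ∩ A)).toReal = (μ A).toReal := by
      rw [← hdiff, ← ENNReal.toReal_add (measure_ne_top μ _) (measure_ne_top μ _), hsplit]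
    have e1 : (μ (A ∩ {ω | S (a+1) ω ≤ q (a+1) ω})).toReal
        = ∫ ω in A, Fc (a+1) ω (q (a+1) ω) ∂μ := by
      rw [Set.inter_comm]; exact hsub a A hA
    have hint : ∫ ω in A, Fc (a+1) ω (q (a+1) ω) ∂μ ≤ (1 - 1/((n:ℝ)+1)) * (μ A).toReal := by
      calc ∫ ω in A, Fc (a+1) ω (q (a+1) ω) ∂μ
          ≤ ∫ _ω in A, (1 - 1/((n:ℝ)+1)) ∂μ := by
            refine setIntegral_mono_on ((hcovint a).integrableOn)
              (integrableOn_const (measure_ne_top μ A)) hA' fun ω hω => ?_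
            have := hsubA hω
            simp only [Set.mem_compl_iff, Set.mem_setOf_eq, not_lt] at this
            exact this
        _ = (1 - 1/((n:ℝ)+1)) * (μ A).toReal := by
            rw [setIntegral_const, smul_eq_mul, mul_comm]; rfl
    linarith
  -- step event measurability
  have hX1meas : ∀ a : ℕ, MeasurableSet[ℱ (a+1)] {ω | S (a+1) ω ≤ q (a+1) ω} :=
    fun a => measurableSet_le (hSmeas (a+1) (by omega))
      ((hqmeas a).mono (ℱ.mono (by omega)) le_rfl)
  have hX2meas : ∀ a : ℕ, MeasurableSet[ℱ (a+1)] {ω | q (a+1) ω < S (a+1) ω} :=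
    fun a => measurableSet_lt ((hqmeas a).mono (ℱ.mono (by omega)) le_rfl)
      (hSmeas (a+1) (by omega))
  -- no long runs of non-errors
  set N₁ : ℕ := ⌈(B+η)/(η*α)⌉₊ + 1 with hN₁
  have himp1 : ∀ (a : ℕ) (ω : Ω), ¬ (∀ i < N₁ + 1, ω ∈ {ω | S (a+1+i) ω ≤ q (a+1+i) ω}) := by
    intro a ω h
    have key : ∀ i, i ≤ N₁ → q (a+1+i) ω = q (a+1) ω - i*(η*α) := by
      intro i hi
      induction i with
      | zero => simp
      | succ i ih =>
          have hrec' := hrec (a+1+i) (by omega) ω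
          have hSle : S (a+1+i) ω ≤ q (a+1+i) ω := h i (by omega)
          rw [if_neg (not_lt.mpr hSle)] at hrec'
          have e : a+1+i+1 = a+1+(i+1) := by omega
          rw [e] at hrec'
          rw [hrec', ih (by omega)]
          push_cast
          ring
    have h1 : S (a+1+N₁) ω ≤ q (a+1+N₁) ω := h N₁ (by omega)
    have h2 : (0:ℝ) ≤ S (a+1+N₁) ω := (hSrange (a+1+N₁) (by omega) ω).1
    have h3 := key N₁ le_rfl
    have h4 := (hqbdd a ω).2
    have hηα : (0:ℝ) < η*α := by positivity
    have h5 : (B+η)/(η*α) ≤ (⌈(B+η)/(η*α)⌉₊ : ℝ) := Nat.le_ceil _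
    have h8 : B+η ≤ (⌈(B+η)/(η*α)⌉₊ : ℝ) * (η*α) := by
      have := mul_le_mul_of_nonneg_right h5 hηα.le
      rwa [div_mul_cancel₀ _ (ne_of_gt hηα)] at this
    have h7 : ((N₁ : ℝ)) = (⌈(B+η)/(η*α)⌉₊ : ℝ) + 1 := by rw [hN₁]; push_cast; ring
    nlinarith [h1, h2, h3, h4, h7, h8, hηα]
  -- no long runs of errors
  set N₂ : ℕ := ⌈(B+η)/(η*(1-α))⌉₊ + 1 with hN₂
  have himp2 : ∀ (a : ℕ) (ω : Ω), ¬ (∀ i < N₂ + 1, ω ∈ {ω | q (a+1+i) ω < S (a+1+i) ω}) := by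
    intro a ω h
    have key : ∀ i, i ≤ N₂ → q (a+1+i) ω = q (a+1) ω + i*(η*(1-α)) := by
      intro i hi
      induction i with
      | zero => simp
      | succ i ih =>
          have hrec' := hrec (a+1+i) (by omega) ω
          have hSlt : q (a+1+i) ω < S (a+1+i) ω := h i (by omega)
          rw [if_pos hSlt] at hrec'
          have e : a+1+i+1 = a+1+(i+1) := by omega
          rw [e] at hrec'
          rw [hrec', ih (by omega)]
          push_cast
          ring
    have h1 : q (a+1+N₂) ω < S (a+1+N₂) ω := h N₂ (by omega)
    have h2 : S (a+1+N₂) ω ≤ B := (hSrange (a+1+N₂) (by omega) ω).2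
    have h3 := key N₂ le_rfl
    have h4 := (hqbdd a ω).1
    have hη1α : (0:ℝ) < η*(1-α) := by
      have : (0:ℝ) < 1 - α := by linarith
      positivity
    have h5 : (B+η)/(η*(1-α)) ≤ (⌈(B+η)/(η*(1-α))⌉₊ : ℝ) := Nat.le_ceil _
    have h8 : B+η ≤ (⌈(B+η)/(η*(1-α))⌉₊ : ℝ) * (η*(1-α)) := by
      have := mul_le_mul_of_nonneg_right h5 hη1α.le
      rwa [div_mul_cancel₀ _ (ne_of_gt hη1α)] at this
    have h7 : ((N₂ : ℝ)) = (⌈(B+η)/(η*(1-α))⌉₊ : ℝ) + 1 := by rw [hN₂]; push_cast; ring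
    nlinarith [h1, h2, h3, h4, h7, h8, hη1α]
  -- apply the block Borel–Cantelli lemma
  have hεpos : ∀ n : ℕ, (0:ℝ) < 1/((n:ℝ)+1) := fun n => by positivity
  have hεle1 : ∀ n : ℕ, (1/((n:ℝ)+1)) ≤ 1 := fun n => by
    rw [div_le_one (by positivity)]
    have : (0:ℝ) ≤ (n:ℝ) := Nat.cast_nonneg n
    linarith
  have hae1 : ∀ n : ℕ, ∀ᵐ ω ∂μ, ∀ T : ℕ, ∃ s, T ≤ s ∧ 1 ≤ s ∧
      Fc s ω (q s ω) < 1/((n:ℝ)+1) := by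
    intro n
    exact freq_bad μ ℱ (fun t => {ω | Fc t ω (q t ω) < 1/((n:ℝ)+1)})
      (fun t => {ω | S t ω ≤ q t ω}) (1/((n:ℝ)+1)) (hεpos n) (hεle1 n) (N₁ + 1)
      (fun a => measurableSet_lt (hcovmeas a) measurable_const)
      (fun a => hX1meas a)
      (fun a A hA hs => hprob1 n a A hA hs)
      himp1
  have hae2 : ∀ n : ℕ, ∀ᵐ ω ∂μ, ∀ T : ℕ, ∃ s, T ≤ s ∧ 1 ≤ s ∧
      1 - 1/((n:ℝ)+1) < Fc s ω (q s ω) := by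
    intro n
    exact freq_bad μ ℱ (fun t => {ω | 1 - 1/((n:ℝ)+1) < Fc t ω (q t ω)})
      (fun t => {ω | q t ω < S t ω}) (1/((n:ℝ)+1)) (hεpos n) (hεle1 n) (N₂ + 1)
      (fun a => measurableSet_lt measurable_const (hcovmeas a))
      (fun a => hX2meas a)
      (fun a A hA hs => hprob2 n a A hA hs)
      himp2
  filter_upwards [ae_all_iff.mpr hae1, ae_all_iff.mpr hae2] with ω h1 h2
  set f : ℕ → ℝ := fun t => Fc t ω (q t ω) with hf
  have hfb : ∀ t, 1 ≤ t → f t ∈ Set.Icc (0:ℝ) 1 := fun t ht => hFc01 t ht ω _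
  have hbd_le : IsBoundedUnder (· ≤ ·) atTop f :=
    isBoundedUnder_of_eventually_le (a := 1) (eventually_atTop.mpr ⟨1, fun t ht => (hfb t ht).2⟩)
  have hbd_ge : IsBoundedUnder (· ≥ ·) atTop f :=
    isBoundedUnder_of_eventually_ge (a := 0) (eventually_atTop.mpr ⟨1, fun t ht => (hfb t ht).1⟩)
  constructor
  · -- liminf = 0
    have hle : ∀ n : ℕ, liminf f atTop ≤ 1/((n:ℝ)+1) := by
      intro n
      refine liminf_le_of_frequently_le ?_ hbd_ge
      rw [frequently_atTop]
      intro T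
      obtain ⟨s, hs1, _, hs3⟩ := h1 n T
      exact ⟨s, hs1, le_of_lt hs3⟩
    have hge : (0:ℝ) ≤ liminf f atTop :=
      le_liminf_of_le hbd_le.isCoboundedUnder_ge
        (eventually_atTop.mpr ⟨1, fun t ht => (hfb t ht).1⟩)
    refine le_antisymm ?_ hge
    by_contra hcon
    push_neg at hcon
    obtain ⟨n, hn⟩ := exists_nat_one_div_lt hcon
    have := hle n
    linarith
  · -- limsup = 1
    have hge : ∀ n : ℕ, 1 - 1/((n:ℝ)+1) ≤ limsup f atTop := by
      intro n
      refine le_limsup_of_frequently_le ?_ hbd_le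
      rw [frequently_atTop]
      intro T
      obtain ⟨s, hs1, _, hs3⟩ := h2 n T
      exact ⟨s, hs1, le_of_lt hs3⟩
    have hle : limsup f atTop ≤ 1 :=
      limsup_le_of_le hbd_ge.isCoboundedUnder_le
        (eventually_atTop.mpr ⟨1, fun t ht => (hfb t ht).2⟩)
    refine le_antisymm hle ?_
    by_contra hcon
    push_neg at hcon
    have hpos : (0:ℝ) < 1 - limsup f atTop := by linarith
    obtain ⟨n, hn⟩ := exists_nat_one_div_lt hpos
    have := hge n
    linarith
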